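/- If a data set (X,d) is (α², k)-strictly separable with witnessing clustering C, and d' is an α-multiplicative perturbation of d, then (X,d') is (1, k)-strictly separable with the same witnessing clustering C. That is, under d', every in-cluster distance is at most every between-cluster distance. -/

import Mathlib

open Finset

def IsDissim {X : Type*} (d : X → X → ℝ) : Prop :=
  (∀ x y, d x y = d y x) ∧ (∀ x, d x x = 0) ∧ (∀ x y, 0 ≤ d x y)

open Classical in
noncomputable def clDist {X : Type*} [Fintype X] {k l : ℕ}
    (c : X → Fin k) (c' : X → Fin l) : ℝ :=
  ((Finset.univ.filter fun p : X × X =>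
      p.1 ≠ p.2 ∧ ¬((c p.1 = c p.2) ↔ (c' p.1 = c' p.2))).card : ℝ) /
    ((Fintype.card X : ℝ) * ((Fintype.card X : ℝ) - 1))

/-- If `(X, d)` is `(α², k)`-strictly separable with witnessing clustering `c`, then after any
`α`-multiplicative perturbation `d'`, `(X, d')` is `(1, k)`-strictly separable with the same
witness: every in-cluster distance is at most every between-cluster distance. -/
theorem strictly_separable_multiplicative_perturbation
    {X : Type*} {k : ℕ} (c : X → Fin k)
    (α : ℝ) (hα : 1 < α) (d d' : X → X → ℝ)
    (hd : IsDissim d) (hd' : IsDissim d')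
    (hsep : ∀ x y z : X, c x = c y → c x ≠ c z → α ^ 2 * d x y ≤ d x z)
    (hpert : ∀ x y, α⁻¹ * d x y ≤ d' x y ∧ d' x y ≤ α * d x y) :
    ∀ x y z : X, c x = c y → c x ≠ c z → 1 * d' x y ≤ d' x z := by
  intro x y z hxy hxz
  have h1 := (hpert x y).2
  have h2 := (hpert x z).1
  have h3 := hsep x y z hxy hxz
  have hα0 : 0 < α := lt_trans one_pos hα
  have : α⁻¹ * (α ^ 2 * d x y) ≤ α⁻¹ * d x z :=
    mul_le_mul_of_nonneg_left h3 (by positivity)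
  have heq : α⁻¹ * (α ^ 2 * d x y) = α * d x y := by
    field_simp
  linarith
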